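/- Fix an integer g ≥ 2 and an integer d. Suppose gcd(d−g+1, 2g−2) ≠ 1 and that no stable vine graph of genus g with δ = 2 edges is d-special. Then gcd(d−g+1, 2g−2) = 2, g is even, and the vine graph of genus g with δ = 3 edges and weights g₁ = g₂ = g/2 − 1 is d-special. -/

import Mathlib

open Finset

noncomputable section
open scoped Classical

variable {V : Type} [Fintype V] [DecidableEq V]

/-- The simple graph underlying a multigraph with multiplicity function `k`:
`u` and `v` are adjacent iff `u ≠ v` and some edge joins them. -/
def graphOf (k : V → V → ℕ) : SimpleGraph V where
  Adj u v := u ≠ v ∧ (0 < k u v ∨ 0 < k v u)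
  symm := ⟨fun u v h => ⟨h.1.symm, h.2.symm⟩⟩
  loopless := ⟨fun v h => h.1 rfl⟩

/-- The number of edges of a multigraph: loops plus half the ordered count. -/
def numEdges (k : V → V → ℕ) : ℕ :=
  (∑ v, k v v) + (∑ u, ∑ v ∈ Finset.univ.erase u, k u v) / 2

/-- The genus of a weighted graph: `∑ w(v) + b₁`, with `b₁ = #E - #V + 1`. -/
def genus (k : V → V → ℕ) (w : V → ℕ) : ℤ :=
  (∑ v, (w v : ℤ)) + ((numEdges k : ℤ) - (Fintype.card V : ℤ) + 1)

/-- Stability: connected, and each weight-zero vertex has valency at least 3. -/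
def IsStable (k : V → V → ℕ) (w : V → ℕ) : Prop :=
  (graphOf k).Connected ∧
    ∀ v, w v = 0 → 3 ≤ 2 * k v v + ∑ u ∈ Finset.univ.erase v, k u v

/-- `δ_A`: the number of edges joining `A` to its complement. -/
def deltaA (k : V → V → ℕ) (A : Finset V) : ℤ :=
  ∑ u ∈ A, ∑ v ∈ Aᶜ, (k u v : ℤ)

/-- `w_A = Σ_{v∈A} (2w(v) − 2 + 2k(v,v) + Σ_{u≠v} k(u,v))`. -/
def wA (k : V → V → ℕ) (w : V → ℕ) (A : Finset V) : ℤ :=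
  ∑ v ∈ A, (2 * (w v : ℤ) - 2 + 2 * (k v v : ℤ) + ∑ u ∈ Finset.univ.erase v, (k u v : ℤ))

/-- `d_A`: the total degree of a multidegree on the subset `A`. -/
def degA (d : V → ℤ) (A : Finset V) : ℤ := ∑ v ∈ A, d v

/-- `m_A(d) = d·w_A/(2g−2) − δ_A/2 ∈ ℚ`. -/
def mA (k : V → V → ℕ) (w : V → ℕ) (D : ℤ) (A : Finset V) : ℚ :=
  (D : ℚ) * (wA k w A : ℚ) / ((2 * genus k w - 2 : ℤ) : ℚ) - (deltaA k A : ℚ) / 2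

/-- A balanced multidegree of total degree `D`. -/
def IsBalanced (k : V → V → ℕ) (w : V → ℕ) (D : ℤ) (d : V → ℤ) : Prop :=
  degA d Finset.univ = D ∧ ∀ A : Finset V, mA k w D A ≤ (degA d A : ℚ)

/-- A strictly balanced multidegree of total degree `D`. -/
def IsStrictlyBalanced (k : V → V → ℕ) (w : V → ℕ) (D : ℤ) (d : V → ℤ) : Prop :=
  IsBalanced k w D d ∧
    ∀ A : Finset V, A ≠ ∅ → A ≠ Finset.univ → mA k w D A < (degA d A : ℚ)

/-- `(Γ,w)` is `d`-general if every balanced multidegree of total degree `d`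
is strictly balanced. -/
def IsDGeneral (k : V → V → ℕ) (w : V → ℕ) (D : ℤ) : Prop :=
  ∀ d : V → ℤ, IsBalanced k w D d → IsStrictlyBalanced k w D d

/-- The generator `c_v` of the lattice `Λ`. -/
def cvec (k : V → V → ℕ) (v : V) : V → ℤ := fun u =>
  if u = v then -(∑ x ∈ Finset.univ.erase v, (k x v : ℤ)) else (k u v : ℤ)

/-- The lattice `Λ ⊆ ℤ^V` generated by the `c_v`. -/
def Lambda (k : V → V → ℕ) : AddSubgroup (V → ℤ) :=
  AddSubgroup.closure (Set.range (cvec k))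

/-- The total-degree homomorphism `ℤ^V → ℤ`. -/
def sumHom (V : Type) [Fintype V] : (V → ℤ) →+ ℤ :=
  { toFun := fun d => ∑ v, d v
    map_zero' := by simp
    map_add' := fun a b => by simp [Finset.sum_add_distrib] }

/-- `Z = {d ∈ ℤ^V : Σ_v d(v) = 0}`. -/
def Zsub (V : Type) [Fintype V] : AddSubgroup (V → ℤ) := (sumHom V).ker

/-- Remove the edge(s) joining `a` and `b` from the multigraph. -/
def removeEdge (k : V → V → ℕ) (a b : V) : V → V → ℕ := fun u v =>
  if (u = a ∧ v = b) ∨ (u = b ∧ v = a) then 0 else k u v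

/-- `a`–`b` is a bridge: a single non-loop edge whose removal disconnects the graph. -/
def IsBridge (k : V → V → ℕ) (a b : V) : Prop :=
  a ≠ b ∧ k a b = 1 ∧ ¬ (graphOf (removeEdge k a b)).Connected

/-- `A` induces a connected sub-multigraph. -/
def IsConnectedSubset (k : V → V → ℕ) (A : Finset V) : Prop :=
  ((graphOf k).induce (A : Set V)).Connected

/-- The equivalence relation `≈` on `V` generated by bridges. -/
def contractSetoid (k : V → V → ℕ) : Setoid V :=
  ⟨Relation.EqvGen (fun u v => IsBridge k u v), Relation.EqvGen.is_equivalence _⟩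

/-- The vertex set `V² = V/≈` of the contracted graph `Γ²`. -/
def V2 (k : V → V → ℕ) : Type := Quotient (contractSetoid k)

instance (k : V → V → ℕ) : Finite (V2 k) := Quotient.finite _

instance (k : V → V → ℕ) : Fintype (V2 k) := Fintype.ofFinite _

/-- The fiber of the quotient map `φ : V → V²` over a class `c`. -/
def fiber (k : V → V → ℕ) (c : V2 k) : Finset V :=
  Finset.univ.filter (fun v => Quotient.mk (contractSetoid k) v = c)

/-- The multiplicity function `k²` of the contracted graph `Γ²`. -/
def k2 (k : V → V → ℕ) : V2 k → V2 k → ℕ := fun c c' =>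
  if c = c' then
    (∑ v ∈ fiber k c, k v v) +
      (∑ u ∈ fiber k c, ∑ v ∈ (fiber k c).erase u,
        if IsBridge k u v then 0 else k u v) / 2
  else ∑ u ∈ fiber k c, ∑ v ∈ fiber k c', k u v

/-- The weight function `w²` of the contracted weighted graph `(Γ²,w²)`. -/
def w2 (k : V → V → ℕ) (w : V → ℕ) : V2 k → ℕ := fun c => ∑ v ∈ fiber k c, w v

/-- The pushforward `α(d)` of a multidegree to the contracted graph. -/
def alphaMap (k : V → V → ℕ) (d : V → ℤ) : V2 k → ℤ := fun c => ∑ v ∈ fiber k c, d v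

/-- The setoid on multidegrees of total degree `D`: two are equivalent if their
difference lies in `Λ`; the quotient is `Δ^d`. -/
def degSetoid (k : V → V → ℕ) (D : ℤ) : Setoid {d : V → ℤ // (∑ v, d v) = D} :=
  ⟨fun a b => (a : V → ℤ) - (b : V → ℤ) ∈ Lambda k, by
    constructor
    · intro a; simpa using (Lambda k).zero_mem
    · intro a b h; have h2 := (Lambda k).neg_mem h; rwa [neg_sub] at h2
    · intro a b c h1 h2
      have h3 := (Lambda k).add_mem h1 h2
      rwa [sub_add_sub_cancel] at h3⟩

/-- Number of edges of the sub-multigraph induced on `A`. -/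
def numEdgesIn (k : V → V → ℕ) (A : Finset V) : ℕ :=
  (∑ v ∈ A, k v v) + (∑ u ∈ A, ∑ v ∈ A.erase u, k u v) / 2

/-- Blow-up of a multigraph at the single bridge `a`–`b`: one exceptional
vertex is inserted in the middle of the bridge. -/
def blowK (k : V → V → ℕ) (a b : V) : (V ⊕ Unit) → (V ⊕ Unit) → ℕ
  | Sum.inl u, Sum.inl v => if (u = a ∧ v = b) ∨ (u = b ∧ v = a) then 0 else k u v
  | Sum.inl u, Sum.inr _ => if u = a ∨ u = b then 1 else 0
  | Sum.inr _, Sum.inl v => if v = a ∨ v = b then 1 else 0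
  | Sum.inr _, Sum.inr _ => 0

/-- Weight function of the blow-up at one bridge: exceptional vertex has weight 0. -/
def blowW (w : V → ℕ) : V ⊕ Unit → ℕ
  | Sum.inl v => w v
  | Sum.inr _ => 0

/-- Blow-up of a multigraph at a set `S` of bridges (given as ordered pairs):
one exceptional vertex is inserted in the middle of each bridge of `S`. -/
def blowKS (k : V → V → ℕ) (S : Finset (V × V)) :
    (V ⊕ {p : V × V // p ∈ S}) → (V ⊕ {p : V × V // p ∈ S}) → ℕ
  | Sum.inl u, Sum.inl v => if (u, v) ∈ S ∨ (v, u) ∈ S then 0 else k u v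
  | Sum.inl u, Sum.inr e => if u = e.1.1 ∨ u = e.1.2 then 1 else 0
  | Sum.inr e, Sum.inl v => if v = e.1.1 ∨ v = e.1.2 then 1 else 0
  | Sum.inr _, Sum.inr _ => 0

/-- Weight function of the blow-up at a set of bridges. -/
def blowWS (w : V → ℕ) (S : Finset (V × V)) : (V ⊕ {p : V × V // p ∈ S}) → ℕ
  | Sum.inl v => w v
  | Sum.inr _ => 0

/-- Strictly balanced multidegree of total degree `D` on the blow-up `Γ̂_S`:
balanced (with degree 1 on each exceptional vertex), and the inequality is
strict for every proper nonempty `A` such that some edge between `A` and its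
complement has no exceptional endpoint. -/
def IsStrictlyBalancedBlowS (k : V → V → ℕ) (w : V → ℕ) (S : Finset (V × V)) (D : ℤ)
    (dh : (V ⊕ {p : V × V // p ∈ S}) → ℤ) : Prop :=
  IsBalanced (blowKS k S) (blowWS w S) D dh ∧
    (∀ e : {p : V × V // p ∈ S}, dh (Sum.inr e) = 1) ∧
    ∀ A : Finset (V ⊕ {p : V × V // p ∈ S}), A ≠ ∅ → A ≠ Finset.univ →
      (∃ u v : V, Sum.inl u ∈ A ∧ Sum.inl v ∉ A ∧ 0 < blowKS k S (Sum.inl u) (Sum.inl v)) →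
      mA (blowKS k S) (blowWS w S) D A < (degA dh A : ℚ)

/-- Multiplicity function of the vine graph: two vertices joined by `δ` edges,
no loops. -/
def vineK (δ : ℕ) : Fin 2 → Fin 2 → ℕ := fun u v => if u = v then 0 else δ

/-- Weight function of the vine graph with weights `g₁, g₂`. -/
def vineW (g1 g2 : ℕ) : Fin 2 → ℕ := fun v => if v = 0 then g1 else g2

/-- The data of a stable vine graph of genus `g` with weights `g₁, g₂` and `δ` edges. -/
def StableVine (g : ℤ) (g1 g2 δ : ℕ) : Prop :=
  2 ≤ δ ∧ ((g1 = 0 ∨ g2 = 0) → 3 ≤ δ) ∧ (g1 : ℤ) + (g2 : ℤ) + (δ : ℤ) - 1 = g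

lemma fin2cases (A : Finset (Fin 2)) :
    A = ∅ ∨ A = {0} ∨ A = {1} ∨ A = Finset.univ := by revert A; decide

lemma vine_numEdges (δ : ℕ) : numEdges (vineK δ) = δ := by
  simp [numEdges, vineK, Fin.sum_univ_two,
    show (Finset.univ.erase (0:Fin 2)) = {1} by decide,
    show (Finset.univ.erase (1:Fin 2)) = {0} by decide]
  omega

lemma vine_genus (δ g1 g2 : ℕ) :
    genus (vineK δ) (vineW g1 g2) = (g1:ℤ) + g2 + δ - 1 := by
  simp [genus, vine_numEdges, vineW, Fin.sum_univ_two]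
  ring

lemma vine_wA0 (δ g1 g2 : ℕ) :
    wA (vineK δ) (vineW g1 g2) {0} = 2*(g1:ℤ) - 2 + δ := by
  simp [wA, vineK, vineW, show (Finset.univ.erase (0:Fin 2)) = {1} by decide]

lemma vine_wA1 (δ g1 g2 : ℕ) :
    wA (vineK δ) (vineW g1 g2) {1} = 2*(g2:ℤ) - 2 + δ := by
  simp [wA, vineK, vineW, show (Finset.univ.erase (1:Fin 2)) = {0} by decide]

lemma vine_dA0 (δ : ℕ) : deltaA (vineK δ) {0} = (δ:ℤ) := by
  simp [deltaA, vineK, show ({0}:Finset (Fin 2))ᶜ = {1} by decide]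

lemma vine_dA1 (δ : ℕ) : deltaA (vineK δ) {1} = (δ:ℤ) := by
  simp [deltaA, vineK, show ({1}:Finset (Fin 2))ᶜ = {0} by decide]

lemma vine_special (δ g1 g2 : ℕ) (D a : ℤ)
    (hG : (2:ℤ) ≤ (g1:ℤ) + g2 + δ - 1)
    (ha : (D:ℚ) * (2*g1 - 2 + δ) / (2*((g1:ℚ)+g2+δ-1) - 2) - δ/2 = a) :
    ¬ IsDGeneral (vineK δ) (vineW g1 g2) D := by
  have hqne : (2*((g1:ℚ)+g2+δ-1) - 2) ≠ 0 := by
    have : (2:ℚ) ≤ (g1:ℚ)+g2+δ-1 := by exact_mod_cast hG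
    linarith
  set dd : Fin 2 → ℤ := fun v => if v = 0 then a else D - a with hdd
  have hm0 : mA (vineK δ) (vineW g1 g2) D {0} = (a:ℚ) := by
    rw [mA, vine_genus, vine_wA0, vine_dA0]
    push_cast
    rw [← ha]
  have hm1 : mA (vineK δ) (vineW g1 g2) D {1} = (D:ℚ) - a - δ := by
    rw [mA, vine_genus, vine_wA1, vine_dA1]
    push_cast
    have key : (D:ℚ) * (2*(g2:ℚ) - 2 + δ) / (2*((g1:ℚ)+g2+δ-1) - 2)
        = D - (D:ℚ) * (2*(g1:ℚ) - 2 + δ) / (2*((g1:ℚ)+g2+δ-1) - 2) := by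
      rw [eq_sub_iff_add_eq, ← add_div, div_eq_iff hqne]; ring
    linarith [ha, key]
  have hmE : mA (vineK δ) (vineW g1 g2) D ∅ = 0 := by
    simp [mA, wA, deltaA]
  have hmU : mA (vineK δ) (vineW g1 g2) D Finset.univ = (D:ℚ) := by
    rw [mA]
    have hwu : wA (vineK δ) (vineW g1 g2) Finset.univ = 2*((g1:ℤ)+g2+δ-1) - 2 := by
      simp [wA, vineK, vineW, Fin.sum_univ_two,
        show (Finset.univ.erase (0:Fin 2)) = {1} by decide,
        show (Finset.univ.erase (1:Fin 2)) = {0} by decide]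
      ring
    have hdu : deltaA (vineK δ) Finset.univ = 0 := by
      simp [deltaA]
    rw [hwu, hdu, vine_genus]
    push_cast
    rw [mul_div_assoc, div_self hqne]; ring
  have hdgE : degA dd ∅ = 0 := by simp [degA]
  have hdg0 : degA dd {0} = a := by simp [degA, hdd]
  have hdg1 : degA dd {1} = D - a := by simp [degA, hdd]
  have hdgU : degA dd Finset.univ = D := by
    simp [degA, Fin.sum_univ_two, hdd]
  have hbal : IsBalanced (vineK δ) (vineW g1 g2) D dd := by
    constructor
    · simpa [degA] using hdgU
    · intro A
      rcases fin2cases A with h|h|h|h <;> subst h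
      · rw [hmE, hdgE]; norm_num
      · rw [hm0, hdg0]
      · rw [hm1, hdg1]
        have : (0:ℚ) ≤ (δ:ℚ) := by positivity
        push_cast; linarith
      · rw [hmU, hdgU]
  intro hgen
  obtain ⟨-, hstrict⟩ := hgen dd hbal
  have := hstrict {0} (by decide) (by decide)
  rw [hm0, hdg0] at this
  exact lt_irrefl _ this
/-- If `gcd(d−g+1, 2g−2) ≠ 1` and no stable vine graph of genus
`g` with `δ = 2` edges is `d`-special, then `gcd(d−g+1, 2g−2) = 2`, `g` is even
and the vine graph with `δ = 3`, `g₁ = g₂ = g/2 − 1` is `d`-special. -/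
theorem stmt15 (g d : ℤ) (hg : 2 ≤ g)
    (h1 : Int.gcd (d - g + 1) (2 * g - 2) ≠ 1)
    (h2 : ∀ g1 g2 : ℕ, StableVine g g1 g2 2 → IsDGeneral (vineK 2) (vineW g1 g2) d) :
    Int.gcd (d - g + 1) (2 * g - 2) = 2 ∧
      ∃ m : ℕ, g = 2 * ((m : ℤ) + 1) ∧ ¬ IsDGeneral (vineK 3) (vineW m m) d := by
  -- Step 1: d is coprime to g - 1
  have hcop : Int.gcd d (g - 1) = 1 := by
    by_contra hf
    have hfdd : ((Int.gcd d (g-1) : ℤ)) ∣ d := Int.gcd_dvd_left _ _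
    have hfdn : ((Int.gcd d (g-1) : ℤ)) ∣ (g-1) := Int.gcd_dvd_right _ _
    have hf0 : Int.gcd d (g-1) ≠ 0 := by
      intro h0
      obtain ⟨-, h⟩ := Int.gcd_eq_zero_iff.mp h0
      omega
    set f := Int.gcd d (g-1) with hfdef
    have hf2 : 2 ≤ f := by omega
    set n := (g-1).toNat with hndef
    have hgn : (g-1) = (n:ℤ) := by rw [hndef, Int.toNat_of_nonneg (by omega)]
    have hfn : f ∣ n := by
      have := hfdn; rw [hgn] at this; exact_mod_cast this
    have hg1f : (n / f) * f = n := Nat.div_mul_cancel hfn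
    have hn1' : 1 ≤ n := by omega
    set g1 := n / f with hg1def
    have hg1pos : 1 ≤ g1 := Nat.div_pos (Nat.le_of_dvd (by omega) hfn) (by omega)
    have hg1lt : g1 < n := by
      have h2n : g1 * 2 ≤ g1 * f := Nat.mul_le_mul_left _ hf2
      omega
    set g2 := n - g1 with hg2def
    have hgg : g1 + g2 = n := by omega
    have hsv : StableVine g g1 g2 2 := by
      refine ⟨le_refl _, ?_, ?_⟩
      · intro hor; exfalso; omega
      · push_cast; omega
    have hgen := h2 g1 g2 hsv
    obtain ⟨t, ht⟩ := hfdd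
    have hc : d * g1 = (n:ℤ) * t := by
      rw [ht]; push_cast [← hg1f]; ring
    refine vine_special 2 g1 g2 d (t - 1) (by push_cast; omega) ?_ hgen
    have hcq : (d:ℚ) * g1 = (n:ℚ) * t := by exact_mod_cast hc
    have hgq : (g1:ℚ) + g2 = n := by exact_mod_cast hgg
    have hg1q : (1:ℚ) ≤ (g1:ℚ) := by exact_mod_cast hg1pos
    have hg2q : (0:ℚ) ≤ (g2:ℚ) := Nat.cast_nonneg _
    have hden : (2*((g1:ℚ)+g2+2-1) - 2) ≠ 0 := by push_cast; linarith
    push_cast at hden ⊢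
    have key : (d:ℚ) * (2*(g1:ℚ) - 2 + 2) / (2*((g1:ℚ)+g2+2-1) - 2) = t := by
      rw [div_eq_iff hden]
      linear_combination 2 * hcq - 2 * (t:ℚ) * hgq
    rw [key]; ring
  -- Step 2: gcd(d-g+1, 2g-2) divides 2
  have hed : ((Int.gcd (d-g+1) (2*g-2) : ℤ)) ∣ (d - g + 1) := Int.gcd_dvd_left _ _
  have he2g : ((Int.gcd (d-g+1) (2*g-2) : ℤ)) ∣ (2*g - 2) := Int.gcd_dvd_right _ _
  have hcop' : IsCoprime (d - g + 1 : ℤ) (g - 1) := by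
    have h0 : IsCoprime d (g-1) := Int.isCoprime_iff_gcd_eq_one.mpr hcop
    have h3 := h0.add_mul_left_left (-1)
    have : d + (g-1) * (-1) = d - g + 1 := by ring
    rwa [this] at h3
  have hecop : IsCoprime ((Int.gcd (d-g+1) (2*g-2) : ℤ)) (g-1) :=
    hcop'.of_isCoprime_of_dvd_left hed
  have hediv2 : ((Int.gcd (d-g+1) (2*g-2) : ℤ)) ∣ 2 := by
    have h4 : ((Int.gcd (d-g+1) (2*g-2) : ℤ)) ∣ 2 * (g-1) := by
      rw [show (2:ℤ)*(g-1) = 2*g-2 by ring]; exact he2g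
    exact hecop.dvd_of_dvd_mul_right h4
  have he0 : Int.gcd (d-g+1) (2*g-2) ≠ 0 := by
    intro h0
    obtain ⟨-, h⟩ := Int.gcd_eq_zero_iff.mp h0
    omega
  have hee : Int.gcd (d-g+1) (2*g-2) = 2 := by
    have he2 : Int.gcd (d-g+1) (2*g-2) ∣ 2 := by exact_mod_cast hediv2
    have := Nat.le_of_dvd (by norm_num) he2
    omega
  refine ⟨hee, ?_⟩
  -- Step 3: parity
  have h2dvd : (2:ℤ) ∣ d - g + 1 := by rw [hee] at hed; exact_mod_cast hed
  have hgodd : ¬ (2:ℤ) ∣ (g - 1) := by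
    intro hdvd
    have hdd : (2:ℤ) ∣ d := by omega
    have hx := Int.dvd_gcd hdd hdvd
    rw [hcop] at hx
    norm_num at hx
  refine ⟨(g/2 - 1).toNat, by omega, ?_⟩
  set m := (g/2 - 1).toNat with hmdef
  have hdodd : d % 2 = 1 := by omega
  have ha2 : 2 * ((d-3)/2) = d - 3 := by omega
  refine vine_special 3 m m d ((d-3)/2) (by push_cast; omega) ?_
  have ha2q : (2:ℚ) * (((d-3)/2 : ℤ) : ℚ) = (d:ℚ) - 3 := by exact_mod_cast ha2
  have hm0 : (0:ℚ) ≤ (m:ℚ) := Nat.cast_nonneg _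
  have hmq : (2:ℚ) * ((m:ℚ) + m + 3 - 1) - 2 ≠ 0 := by intro hx; linarith
  push_cast
  have key : (d:ℚ) * (2*(m:ℚ) - 2 + 3) / (2*((m:ℚ)+m+3-1) - 2) = (d:ℚ) / 2 := by
    rw [div_eq_iff hmq]; ring
  rw [key]
  linear_combination (-1/2 : ℚ) * ha2q
end
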